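/- (Lemma 2.1.) Let K ∈ ℕ and let v_i and v_j be two distinct nodes such that parent⁻¹(v_i) = {e_i} and parent⁻¹(v_j) = {e_j} for edges e_i ≠ e_j, such that for every index k one has e_i ∈ P_k if and only if e_j ∈ P_k, and such that Δw(e_i) < Δw(e_j). Suppose S ⊆ V is optimal for budget K, v_i ∈ S and v_j ∉ S. Then S* := (S \ {v_i}) ∪ {v_j} is also optimal for budget K, i.e., |S*| ≤ K and val(S*) = max{val(S') : S' ⊆ V, |S'| ≤ K}. -/

import Mathlib

/-- The shortest root-leaf distance of a node-upgrade instance after upgrading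
the node set `S`. -/
noncomputable def sval {V E : Type*} [DecidableEq V] {l : ℕ}
    (parent : E → V) (w u : E → ℝ) (P : Fin l → Finset E) (hl : 0 < l)
    (S : Finset V) : ℝ :=
  Finset.univ.inf' (Finset.univ_nonempty_iff.mpr ⟨⟨0, hl⟩⟩)
    fun k => ∑ e ∈ P k, if parent e ∈ S then u e else w e

/-- `S` is optimal for budget `K`: it respects the budget and its value is the
maximum value over all budget-respecting upgrade sets. -/
def IsOptimal {V E : Type*} [Fintype V] [DecidableEq V] {l : ℕ}
    (parent : E → V) (w u : E → ℝ) (P : Fin l → Finset E) (hl : 0 < l)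
    (K : ℕ) (S : Finset V) : Prop :=
  S.card ≤ K ∧ ∀ S' : Finset V, S'.card ≤ K →
    sval parent w u P hl S' ≤ sval parent w u P hl S

theorem stmt1 {V E : Type*} [Fintype V] [DecidableEq V] [Fintype E] [DecidableEq E]
    (parent : E → V) (w u : E → ℝ) (hwu : ∀ e, w e ≤ u e)
    {l : ℕ} (hl : 0 < l) (P : Fin l → Finset E) (K : ℕ)
    (vi vj : V) (hv : vi ≠ vj) (ei ej : E) (he : ei ≠ ej)
    (hpi : ∀ e, parent e = vi ↔ e = ei)
    (hpj : ∀ e, parent e = vj ↔ e = ej)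
    (hP : ∀ k : Fin l, ei ∈ P k ↔ ej ∈ P k)
    (hdev : u ei - w ei < u ej - w ej)
    (S : Finset V) (hopt : IsOptimal parent w u P hl K S)
    (hiS : vi ∈ S) (hjS : vj ∉ S) :
    IsOptimal parent w u P hl K ((S \ {vi}) ∪ {vj}) := by
  set T : Finset V := (S \ {vi}) ∪ {vj} with hT
  have hpei : parent ei = vi := (hpi ei).mpr rfl
  have hpej : parent ej = vj := (hpj ej).mpr rfl
  have hcard : T.card ≤ S.card := by
    have h1 : (S \ {vi}).card = S.card - 1 := by
      rw [Finset.card_sdiff_of_subset (by simpa using hiS)]; simp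
    calc T.card ≤ (S \ {vi}).card + ({vj} : Finset V).card :=
          Finset.card_union_le _ _
      _ = S.card - 1 + 1 := by rw [h1]; simp
      _ ≤ S.card := by
          have : 1 ≤ S.card := Finset.card_pos.mpr ⟨vi, hiS⟩
          omega
  -- membership facts
  have hmemT : ∀ x : V, x ∈ T ↔ (x ∈ S ∧ x ≠ vi) ∨ x = vj := by
    intro x; simp [hT, Finset.mem_union, Finset.mem_sdiff]; tauto
  have hviT : vi ∉ T := by simp [hmemT, hv]
  have hvjT : vj ∈ T := by rw [hmemT]; right; rfl
  -- per-path inequality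
  have hkey : ∀ k : Fin l,
      (∑ e ∈ P k, if parent e ∈ S then u e else w e) ≤
      (∑ e ∈ P k, if parent e ∈ T then u e else w e) := by
    intro k
    by_cases hik : ei ∈ P k
    · have hjk : ej ∈ P k := (hP k).mp hik
      have hjk' : ej ∈ (P k).erase ei := Finset.mem_erase.mpr ⟨(Ne.symm he), hjk⟩
      have hsum : ∀ g : E → ℝ, ∑ e ∈ P k, g e =
          g ei + (g ej + ∑ e ∈ ((P k).erase ei).erase ej, g e) := by
        intro g
        rw [← Finset.add_sum_erase _ g hik, ← Finset.add_sum_erase _ g hjk']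
      rw [hsum, hsum]
      have hrest : ∑ e ∈ ((P k).erase ei).erase ej,
          (if parent e ∈ S then u e else w e) =
          ∑ e ∈ ((P k).erase ei).erase ej,
          (if parent e ∈ T then u e else w e) := by
        apply Finset.sum_congr rfl
        intro e hmem
        have hej : e ≠ ej := (Finset.mem_erase.mp hmem).1
        have hei : e ≠ ei := (Finset.mem_erase.mp (Finset.mem_erase.mp hmem).2).1
        have h1 : parent e ≠ vi := fun hh => hei ((hpi e).mp hh)
        have h2 : parent e ≠ vj := fun hh => hej ((hpj e).mp hh)
        have : parent e ∈ T ↔ parent e ∈ S := by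
          rw [hmemT]; constructor
          · rintro (⟨h, _⟩ | h); exact h; exact absurd h h2
          · intro h; exact Or.inl ⟨h, h1⟩
        simp only [this]
      rw [hrest]
      have e1 : (if parent ei ∈ S then u ei else w ei) = u ei := by
        rw [hpei]; simp [hiS]
      have e2 : (if parent ei ∈ T then u ei else w ei) = w ei := by
        rw [hpei]; simp [hviT]
      have e3 : (if parent ej ∈ S then u ej else w ej) = w ej := by
        rw [hpej]; simp [hjS]
      have e4 : (if parent ej ∈ T then u ej else w ej) = u ej := by
        rw [hpej]; simp [hvjT]
      rw [e1, e2, e3, e4]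
      linarith
    · have hjk : ej ∉ P k := fun hh => hik ((hP k).mpr hh)
      apply le_of_eq
      apply Finset.sum_congr rfl
      intro e hmem
      have hei : e ≠ ei := fun hh => hik (hh ▸ hmem)
      have hej : e ≠ ej := fun hh => hjk (hh ▸ hmem)
      have h1 : parent e ≠ vi := fun hh => hei ((hpi e).mp hh)
      have h2 : parent e ≠ vj := fun hh => hej ((hpj e).mp hh)
      have : parent e ∈ S ↔ parent e ∈ T := by
        rw [hmemT]; constructor
        · intro h; exact Or.inl ⟨h, h1⟩
        · rintro (⟨h, _⟩ | h); exact h; exact absurd h h2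
      simp only [this]
  have hsval : sval parent w u P hl S ≤ sval parent w u P hl T := by
    unfold sval
    apply Finset.le_inf'
    intro k _
    exact le_trans (Finset.inf'_le _ (Finset.mem_univ k)) (hkey k)
  exact ⟨le_trans hcard hopt.1, fun S' hS' => le_trans (hopt.2 S' hS') hsval⟩
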